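/- arXiv:2001.08977 — 3 statements merged into one kernel-verified Lean document; each statement's English description precedes it below -/
import Mathlib

section
/- Let G be a finite simple graph with vertices s and t, let P₁ and P₂ be shortest s-t paths of G, and let u, v be vertices lying on both P₁ and P₂. Then u appears before v in the vertex sequence of P₁ if and only if u appears before v in the vertex sequence of P₂ (equivalently, [u, v] is a sublist of the vertex sequence of P₁ if and only if it is a sublist of the vertex sequence of P₂). -/
private lemma aux_mem_of_sublist {α : Type*} {u v : α} :
    ∀ {l₃ l₂ : List α}, List.Sublist [u, v] (l₃ ++ u :: l₂) → u ∉ l₃ → v ∈ l₂ := by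
  intro l₃
  induction l₃ with
  | nil =>
    intro l₂ h _
    simp only [List.nil_append] at h
    cases h with
    | cons _ h' => exact h'.subset (by simp)
    | cons_cons _ h' => exact List.singleton_sublist.mp h'
  | cons a l₃ ih =>
    intro l₂ h hu
    rw [List.cons_append] at h
    cases h with
    | cons _ h' => exact ih h' (fun hm => hu (List.mem_cons_of_mem _ hm))
    | cons_cons _ h' => exact absurd List.mem_cons_self hu

private lemma aux_sublist_of_mem {α : Type*} {u v : α} {l₃ l₂ : List α} (h : v ∈ l₂) :
    List.Sublist [u, v] (l₃ ++ u :: l₂) := by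
  apply List.Sublist.trans _ (List.sublist_append_right l₃ _)
  exact List.cons_sublist_cons.mpr (List.singleton_sublist.mpr h)

private lemma aux_order_total {α : Type*} {u v : α} (hne : u ≠ v) :
    ∀ {l : List α}, u ∈ l → v ∈ l →
      List.Sublist [u, v] l ∨ List.Sublist [v, u] l := by
  intro l
  induction l with
  | nil => simp
  | cons a l ih =>
    intro hu hv
    by_cases hau : a = u
    · subst hau
      have hv' : v ∈ l := by
        rcases List.mem_cons.mp hv with h | h
        · exact absurd h.symm hne
        · exact h
      exact Or.inl (List.cons_sublist_cons.mpr (List.singleton_sublist.mpr hv'))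
    · by_cases hav : a = v
      · subst hav
        have hu' : u ∈ l := by
          rcases List.mem_cons.mp hu with h | h
          · exact absurd h.symm (Ne.symm hne)
          · exact h
        exact Or.inr (List.cons_sublist_cons.mpr (List.singleton_sublist.mpr hu'))
      · have hu' : u ∈ l := by
          rcases List.mem_cons.mp hu with h | h
          · exact absurd h (Ne.symm hau)
          · exact h
        have hv' : v ∈ l := by
          rcases List.mem_cons.mp hv with h | h
          · exact absurd h (Ne.symm hav)
          · exact h
        rcases ih hu' hv' with h | h
        · exact Or.inl (h.cons a)
        · exact Or.inr (h.cons a)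

/-- On a shortest path, the prefix up to `u` has length `dist s u`. -/
private lemma aux_takeUntil_length {V : Type*} [DecidableEq V] {G : SimpleGraph V} {s t u : V}
    (p : G.Walk s t) (hp : p.length = G.dist s t) (hu : u ∈ p.support) :
    (p.takeUntil u hu).length = G.dist s u := by
  have hsplit : (p.takeUntil u hu).length + (p.dropUntil u hu).length = p.length := by
    conv_rhs => rw [← p.take_spec hu]
    rw [SimpleGraph.Walk.length_append]
  have h1 : G.dist s u ≤ (p.takeUntil u hu).length := SimpleGraph.dist_le _
  rcases lt_or_eq_of_le h1 with hlt | heq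
  · exfalso
    obtain ⟨q, hq⟩ := (SimpleGraph.Walk.reachable (p.takeUntil u hu)).exists_walk_length_eq_dist
    have : G.dist s t ≤ (q.append (p.dropUntil u hu)).length := SimpleGraph.dist_le _
    rw [SimpleGraph.Walk.length_append, hq] at this
    omega
  · omega

/-- On a shortest path, `[u, v]` sublist implies `dist s u < dist s v`. -/
private lemma aux_dist_lt {V : Type*} [DecidableEq V] {G : SimpleGraph V} {s t u v : V}
    (p : G.Walk s t) (hp : p.length = G.dist s t)
    (hu : u ∈ p.support) (h : List.Sublist [u, v] p.support) :
    G.dist s u < G.dist s v := by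
  have hpath : p.IsPath := p.isPath_of_length_eq_dist hp
  -- decompose the support
  have hsupp : p.support = (p.takeUntil u hu).support ++ (p.dropUntil u hu).support.tail := by
    conv_lhs => rw [← p.take_spec hu]
    rw [SimpleGraph.Walk.support_append]
  have hlast : (p.takeUntil u hu).support = (p.takeUntil u hu).support.dropLast ++ [u] := by
    have h1 := (p.takeUntil u hu).getLast_support
    conv_lhs => rw [← List.dropLast_append_getLast (l := (p.takeUntil u hu).support) (by simp)]
    rw [h1]
  have hnodup_take : (p.takeUntil u hu).support.Nodup := (hpath.takeUntil hu).support_nodup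
  have hunotin : u ∉ (p.takeUntil u hu).support.dropLast := by
    rw [hlast] at hnodup_take
    have := List.disjoint_of_nodup_append hnodup_take
    intro hmem
    exact this hmem (List.mem_singleton_self u)
  have hform : p.support = (p.takeUntil u hu).support.dropLast ++
      u :: (p.dropUntil u hu).support.tail := by
    rw [hsupp]; conv_lhs => rw [hlast]
    simp only [List.append_assoc, List.singleton_append]
  rw [hform] at h
  have hvtail : v ∈ (p.dropUntil u hu).support.tail := aux_mem_of_sublist h hunotin
  have hvdrop : v ∈ (p.dropUntil u hu).support :=
    List.mem_of_mem_tail hvtail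
  have hne : v ≠ u := by
    intro hvu
    subst hvu
    have := (hpath.dropUntil hu).support_nodup
    rw [SimpleGraph.Walk.support_eq_cons] at this
    exact (List.nodup_cons.mp this).1 hvtail
  -- r : walk u → v along the path
  set d := p.dropUntil u hu with hd
  have hrlen : 1 ≤ (d.takeUntil v hvdrop).length := by
    by_contra hcon
    push_neg at hcon
    interval_cases hlen : (d.takeUntil v hvdrop).length
    have := (SimpleGraph.Walk.eq_of_length_eq_zero hlen)
    exact hne this.symm
  have htake := aux_takeUntil_length p hp hu
  -- total length decomposition
  have hsplit1 : (p.takeUntil u hu).length + d.length = p.length := by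
    conv_rhs => rw [← p.take_spec hu]
    rw [SimpleGraph.Walk.length_append]
  have hsplit2 : (d.takeUntil v hvdrop).length + (d.dropUntil v hvdrop).length = d.length := by
    conv_rhs => rw [← d.take_spec hvdrop]
    rw [SimpleGraph.Walk.length_append]
  -- lower bound for dist s v
  have hsv : G.dist s u + 1 ≤ G.dist s v := by
    have hreachsv : G.Reachable s v :=
      ⟨(p.takeUntil u hu).append (d.takeUntil v hvdrop)⟩
    obtain ⟨q, hq⟩ := hreachsv.exists_walk_length_eq_dist
    have hle : G.dist s t ≤ (q.append (d.dropUntil v hvdrop)).length := SimpleGraph.dist_le _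
    rw [SimpleGraph.Walk.length_append, hq] at hle
    omega
  omega

/-- Two vertices lying on two shortest `s`-`t` paths appear in the same relative order
on both paths: `[u, v]` is a sublist of the vertex sequence of `P₁` iff it is a sublist
of the vertex sequence of `P₂`. -/
theorem shortest_paths_same_order {V : Type*} [Fintype V] (G : SimpleGraph V)
    (s t : V) (hreach : G.Reachable s t)
    (p₁ p₂ : G.Walk s t) (h₁ : p₁.length = G.dist s t) (h₂ : p₂.length = G.dist s t)
    (u v : V) (hu₁ : u ∈ p₁.support) (hu₂ : u ∈ p₂.support)
    (hv₁ : v ∈ p₁.support) (hv₂ : v ∈ p₂.support) :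
    (List.Sublist [u, v] p₁.support ↔ List.Sublist [u, v] p₂.support) := by
  classical
  constructor
  · intro h
    have hlt := aux_dist_lt p₁ h₁ hu₁ h
    have hne : u ≠ v := fun he => by subst he; exact lt_irrefl _ hlt
    rcases aux_order_total hne hu₂ hv₂ with h' | h'
    · exact h'
    · exact absurd (aux_dist_lt p₂ h₂ hv₂ h') (by omega)
  · intro h
    have hlt := aux_dist_lt p₂ h₂ hu₂ h
    have hne : u ≠ v := fun he => by subst he; exact lt_irrefl _ hlt
    rcases aux_order_total hne hu₁ hv₁ with h' | h'
    · exact h'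
    · exact absurd (aux_dist_lt p₁ h₁ hv₁ h') (by omega)
end

section
/- Let G = (V, E) be a DAG on a finite vertex set with source s and destination t in which every vertex and every edge lies on some directed s-t path. Then the number of directed s-t paths of G is at least 1 + Σ_{v ∈ V∖{t}} (deg⁺(v) − 1); equivalently, it is at least |E| − |V| + 2. -/
open List Relation

section DChain

variable {V : Type*} [DecidableEq V]

/-- Follow the default successor function `f` for at most `n` steps, stopping at `t`. -/
def dchain (f : V → V) (t : V) : ℕ → V → List V
  | 0, v => [v]
  | n+1, v => if v = t then [t] else v :: dchain f t n (f v)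

variable {f : V → V} {t : V} {E : V → V → Prop}

omit [DecidableEq V] in
lemma getLast?_cons_ne_nil {a : V} {l : List V} (h : l ≠ []) :
    (a :: l).getLast? = l.getLast? := by
  cases l with
  | nil => exact absurd rfl h
  | cons b r => rw [List.getLast?_cons_cons]

lemma dchain_head : ∀ (n : ℕ) (v : V), (dchain f t n v).head? = some v
  | 0, v => rfl
  | n+1, v => by
      unfold dchain
      split <;> simp_all

lemma dchain_ne_nil (n : ℕ) (v : V) : dchain f t n v ≠ [] := by
  intro h
  have := dchain_head (f := f) (t := t) n v
  rw [h] at this; simp at this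

lemma dchain_getLast_ne : ∀ (n : ℕ) (v : V),
    (dchain f t n v).getLast? ≠ some t → (dchain f t n v).length = n + 1
  | 0, v, _ => rfl
  | n+1, v, h => by
      unfold dchain at h ⊢
      by_cases hv : v = t
      · rw [if_pos hv] at h; simp at h
      · rw [if_neg hv] at h ⊢
        rw [getLast?_cons_ne_nil (dchain_ne_nil n (f v))] at h
        simp [dchain_getLast_ne n (f v) h]

lemma dchain_mem (hf : ∀ v, v ≠ t → E v (f v)) :
    ∀ (n : ℕ) (v w : V), w ∈ dchain f t n v → w = v ∨ TransGen E v w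
  | 0, v, w => by intro h; simp [dchain] at h; exact Or.inl h
  | n+1, v, w => by
      intro h
      unfold dchain at h
      split at h
      · rename_i hv; subst hv; simp at h; exact Or.inl h
      · rename_i hv
        rcases List.mem_cons.mp h with h | h
        · exact Or.inl h
        · rcases dchain_mem hf n (f v) w h with h | h
          · exact Or.inr (by rw [h]; exact TransGen.single (hf v hv))
          · exact Or.inr (TransGen.head (hf v hv) h)

lemma dchain_nodup (hf : ∀ v, v ≠ t → E v (f v)) (hirr : ∀ v, ¬ TransGen E v v) :
    ∀ (n : ℕ) (v : V), (dchain f t n v).Nodup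
  | 0, v => by simp [dchain]
  | n+1, v => by
      unfold dchain
      split
      · simp
      · rename_i hv
        refine List.nodup_cons.mpr ⟨fun hm => ?_, dchain_nodup hf hirr n (f v)⟩
        rcases dchain_mem hf n (f v) v hm with h | h
        · exact hirr v (by nth_rewrite 2 [h]; exact TransGen.single (hf v hv))
        · exact hirr v (TransGen.head (hf v hv) h)

lemma dchain_chainE (hf : ∀ v, v ≠ t → E v (f v)) :
    ∀ (n : ℕ) (v : V), (dchain f t n v).Chain' E
  | 0, v => by exact List.isChain_singleton _
  | n+1, v => by
      unfold dchain
      split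
      · exact List.isChain_singleton _
      · rename_i hv
        refine List.isChain_cons.mpr ⟨fun y hy => ?_, dchain_chainE hf n (f v)⟩
        rw [dchain_head] at hy
        cases hy
        exact hf v hv

lemma dchain_chainF :
    ∀ (n : ℕ) (v : V), (dchain f t n v).Chain' (fun a b => b = f a)
  | 0, v => by exact List.isChain_singleton _
  | n+1, v => by
      unfold dchain
      split
      · exact List.isChain_singleton _
      · refine List.isChain_cons.mpr ⟨fun y hy => ?_, dchain_chainF n (f v)⟩
        rw [dchain_head] at hy
        cases hy
        rfl

lemma dchain_getLast [Fintype V] (hf : ∀ v, v ≠ t → E v (f v))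
    (hirr : ∀ v, ¬ TransGen E v v) (v : V) :
    (dchain f t (Fintype.card V) v).getLast? = some t := by
  by_contra h
  have h1 := dchain_getLast_ne (f := f) (t := t) (Fintype.card V) v h
  have h2 := (dchain_nodup hf hirr (Fintype.card V) v).length_le_card
  omega

end DChain


/-- `IsPathList E s t l` means that `l` is a directed `s`-`t` path of the directed graph
`E`: a list of pairwise distinct vertices starting at `s` and ending at `t` in which
every pair of consecutive vertices is joined by an edge of `E`. -/
def IsPathList {V : Type*} (E : V → V → Prop) (s t : V) (l : List V) : Prop :=
  l.Chain' E ∧ l.head? = some s ∧ l.getLast? = some t ∧ l.Nodup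

section Helpers
variable {V : Type*}

lemma exists_next {E : V → V → Prop} {t : V} :
    ∀ {l : List V}, l.Chain' E → l.getLast? = some t →
      ∀ v ∈ l, v ≠ t → ∃ u, E v u := by
  intro l
  induction l with
  | nil => simp
  | cons a r ih =>
      intro hc hl v hv hvt
      cases r with
      | nil =>
          simp at hl hv
          exact absurd (hv.trans hl) hvt
      | cons b r' =>
          rcases List.mem_cons.mp hv with rfl | hv
          · exact ⟨b, (List.isChain_cons_cons.mp hc).1⟩
          · exact ih hc.tail (by rwa [List.getLast?_cons_cons] at hl) v hv hvt

lemma suffix_inj {f : V → V} {L p p' c c' : List V} {v u v' u' : V}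
    (hc : c.head? = some u) (hc' : c'.head? = some u')
    (hfc' : c'.Chain' (fun a b => b = f a))
    (hfc : c.Chain' (fun a b => b = f a))
    (hL : L = p ++ v :: c) (hL' : L = p' ++ v' :: c')
    (hu : u ≠ f v) (hu' : u' ≠ f v') : v = v' ∧ u = u' := by
  obtain ⟨r, rfl⟩ : ∃ r, c = u :: r := by
    cases c with
    | nil => simp at hc
    | cons a r => simp at hc; exact ⟨r, by rw [hc]⟩
  obtain ⟨r', rfl⟩ : ∃ r', c' = u' :: r' := by
    cases c' with
    | nil => simp at hc'
    | cons a r' => simp at hc'; exact ⟨r', by rw [hc']⟩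
  have s1 : v :: u :: r <:+ L := ⟨p, hL.symm⟩
  have s2 : v' :: u' :: r' <:+ L := ⟨p', hL'.symm⟩
  rcases List.suffix_or_suffix_of_suffix s1 s2 with h | h
  · rcases List.suffix_cons_iff.mp h with heq | h2
    · have h1 : v = v' := by injection heq
      have h2 : u = u' := by injection heq with _ h; injection h
      exact ⟨h1, h2⟩
    · exfalso
      have := (hfc'.suffix h2)
      exact hu (List.isChain_cons_cons.mp this).1
  · rcases List.suffix_cons_iff.mp h with heq | h2
    · have h1 : v' = v := by injection heq
      have h2 : u' = u := by injection heq with _ h; injection h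
      exact ⟨h1.symm, h2.symm⟩
    · exfalso
      have := (hfc.suffix h2)
      exact hu' (List.isChain_cons_cons.mp this).1

end Helpers

/-- In a DAG in which every vertex and every edge lies on some directed `s`-`t` path, the
number of directed `s`-`t` paths is at least `1 + Σ_{v ≠ t} (deg⁺(v) − 1)`; equivalently,
at least `|E| − |V| + 2`. -/
theorem dag_num_paths_lower_bound {V : Type*} [Fintype V] [DecidableEq V]
    (E : V → V → Prop) [DecidableRel E]
    (hdag : ∀ v, ¬ Relation.TransGen E v v) (s t : V)
    (hvert : ∀ v : V, ∃ l, IsPathList E s t l ∧ v ∈ l)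
    (hedge : ∀ a b : V, E a b → ∃ l, IsPathList E s t l ∧ [a, b] <:+: l) :
    (1 + ∑ v ∈ Finset.univ.erase t,
        ((Finset.univ.filter (fun u => E v u)).card - 1 : ℤ)
      ≤ ({l : List V | IsPathList E s t l}.ncard : ℤ)) ∧
    ((Finset.univ.filter (fun p : V × V => E p.1 p.2)).card - (Fintype.card V : ℤ) + 2
      ≤ ({l : List V | IsPathList E s t l}.ncard : ℤ)) := by
  classical
  -- t has no outgoing edges
  have hdegt : ∀ b, ¬ E t b := by
    intro b hb
    obtain ⟨l, ⟨hch, hhd, hlast, hnd⟩, p, q, hpq⟩ := hedge t b hb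
    rw [← hpq] at hlast hnd
    have h2 : (t :: b :: q).getLast? = (b :: q).getLast? := List.getLast?_cons_cons
    have h1 : (p ++ [t, b] ++ q).getLast? = (b :: q).getLast? := by
      rw [List.append_assoc]
      rw [show [t, b] ++ q = t :: b :: q from rfl]
      rw [List.getLast?_append, h2]
      cases hq : (b :: q).getLast? with
      | none => simp at hq
      | some x => rfl
    rw [h1] at hlast
    have htmem : t ∈ b :: q := List.mem_of_getLast? hlast
    have hsub : (t :: b :: q).Nodup := by
      have : (t :: b :: q) <+ (p ++ [t, b] ++ q) := by
        rw [List.append_assoc, show [t, b] ++ q = t :: b :: q from rfl]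
        exact (List.suffix_append p _).sublist
      exact this.nodup hnd
    exact (List.nodup_cons.mp hsub).1 htmem
  -- default out-neighbour
  have hex : ∀ v : V, ∃ u, v ≠ t → E v u := by
    intro v
    by_cases hvt : v = t
    · exact ⟨v, fun h => absurd hvt h⟩
    · obtain ⟨l, ⟨hch, hhd, hlast, hnd⟩, hv⟩ := hvert v
      obtain ⟨u, hu⟩ := exists_next hch hlast v hv hvt
      exact ⟨u, fun _ => hu⟩
  choose f hf using hex
  set N := Fintype.card V with hN
  set C : V → List V := fun u => dchain f t N u with hCdef
  have hC_head : ∀ u, (C u).head? = some u := fun u => dchain_head N u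
  have hC_last : ∀ u, (C u).getLast? = some t := fun u => dchain_getLast hf hdag u
  have hC_chainE : ∀ u, (C u).Chain' E := fun u => dchain_chainE hf N u
  have hC_chainF : ∀ u, (C u).Chain' (fun a b => b = f a) := fun u => dchain_chainF N u
  have hC_nodup : ∀ u, (C u).Nodup := fun u => dchain_nodup hf hdag N u
  have hC_mem : ∀ u w, w ∈ C u → w = u ∨ TransGen E u w := fun u w h => dchain_mem hf N u w h
  have hC_cons : ∀ u, ∃ r, C u = u :: r := by
    intro u
    have hh := hC_head u
    cases hcu : C u with
    | nil => rw [hcu] at hh; simp at hh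
    | cons a r => rw [hcu] at hh; simp at hh; exact ⟨r, by rw [hh]⟩
  -- chosen witness paths and splittings for each edge
  choose L hLpath hLinf using hedge
  have hsplit : ∀ a b (h : E a b), ∃ p q, L a b h = p ++ a :: b :: q := by
    intro a b h
    obtain ⟨p, q, hpq⟩ := hLinf a b h
    exact ⟨p, q, by rw [← hpq]; simp⟩
  choose pre post hpre using hsplit
  -- the path associated to a non-default edge
  have hPpath : ∀ (v u : V) (h : E v u), IsPathList E s t (pre v u h ++ v :: C u) := by
    intro v u h
    obtain ⟨hch, hhd, hlast, hnd⟩ := hLpath v u h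
    rw [hpre v u h] at hch hhd hnd
    set p := pre v u h with hp
    set q := post v u h with hq
    clear_value p q
    obtain ⟨r, hr⟩ := hC_cons u
    have hassoc : p ++ v :: C u = (p ++ [v]) ++ C u := by simp
    refine ⟨?_, ?_, ?_, ?_⟩
    · -- Chain'
      rw [hassoc]
      refine List.IsChain.append ?_ (hC_chainE u) ?_
      · exact hch.prefix ⟨u :: q, by simp⟩
      · intro x hx y hy
        rw [List.getLast?_concat] at hx
        rw [hC_head u] at hy
        cases hx; cases hy
        exact h
    · -- head?
      rw [hr]
      cases p with
      | nil => simpa using hhd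
      | cons a p' => simpa using hhd
    · -- getLast?
      rw [hassoc, List.getLast?_append, hC_last u]
      rfl
    · -- Nodup
      rw [hassoc]
      have hnd1 : (p ++ [v]).Nodup := (List.IsPrefix.sublist ⟨u :: q, by simp⟩).nodup hnd
      refine List.Nodup.append hnd1 (hC_nodup u) ?_
      intro w hw1 hw2
      have hvu : TransGen E v u := TransGen.single h
      have hw1' : w = v ∨ TransGen E w v := by
        rcases List.mem_append.mp hw1 with hw | hw
        · have hpw : List.Pairwise (TransGen E) (p ++ v :: u :: q) :=
            List.isChain_iff_pairwise.mp (hch.imp fun a b hab => TransGen.single hab)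
          exact Or.inr ((List.pairwise_append.mp hpw).2.2 w hw v (by simp))
        · simp at hw; exact Or.inl hw
      have hw2' : w = u ∨ TransGen E u w := hC_mem u w hw2
      rcases hw1' with h1 | h1 <;> rcases hw2' with h2 | h2
      · exact hdag u (by rw [h1] at h2; rw [h2] at hvu; exact hvu)
      · exact hdag v (hvu.trans (h1 ▸ h2))
      · exact hdag v (hvu.trans (h2 ▸ h1))
      · exact hdag v (hvu.trans (h2.trans h1))
  -- the base path
  have hbase : IsPathList E s t (C s) := ⟨hC_chainE s, hC_head s, hC_last s, hC_nodup s⟩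
  -- index set and map
  set I : Finset ((_ : V) × V) := (Finset.univ.erase t).sigma
      (fun v => Finset.univ.filter (fun u => E v u ∧ u ≠ f v)) with hI
  have hImem : ∀ x : (_ : V) × V, x ∈ I ↔ x.1 ≠ t ∧ E x.1 x.2 ∧ x.2 ≠ f x.1 := by
    intro x; simp [hI, Finset.mem_sigma, and_assoc]
  set g : Option ((_ : V) × V) → List V := fun o =>
    match o with
    | none => C s
    | some ⟨v, u⟩ => if h : E v u then pre v u h ++ v :: C u else [] with hg
  set T : Finset (Option ((_ : V) × V)) := insert none (I.image some) with hT
  -- each g-value is a path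
  have hgpath : ∀ x ∈ T, IsPathList E s t (g x) := by
    intro x hx
    rcases Finset.mem_insert.mp hx with rfl | hx
    · exact hbase
    · obtain ⟨⟨v, u⟩, hvu, rfl⟩ := Finset.mem_image.mp hx
      obtain ⟨h1, h2, h3⟩ := (hImem _).mp hvu
      simpa [hg, h2] using hPpath v u h2
  -- injectivity
  have hginj : Set.InjOn g ↑T := by
    have hnone : g none = C s := by simp [hg]
    have hcontr : ∀ (v u : V) (h : E v u), u ≠ f v → g (some ⟨v, u⟩) ≠ C s := by
      intro v u h hne heq
      obtain ⟨r, hr⟩ := hC_cons u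
      have hg' : g (some ⟨v, u⟩) = pre v u h ++ v :: C u := by simp [hg, h]
      rw [hg', hr] at heq
      have hinf : [v, u] <:+: C s := ⟨pre v u h, r, by rw [← heq]; simp⟩
      have := (hC_chainF s).infix hinf
      exact hne (List.isChain_cons_cons.mp this).1
    intro x hx y hy hxy
    have hx' : x ∈ T := hx
    have hy' : y ∈ T := hy
    rcases Finset.mem_insert.mp hx' with rfl | hx2 <;>
      rcases Finset.mem_insert.mp hy' with rfl | hy2
    · rfl
    · obtain ⟨⟨v, u⟩, hvu, rfl⟩ := Finset.mem_image.mp hy2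
      obtain ⟨h1, h2, h3⟩ := (hImem _).mp hvu
      exact absurd (hxy.symm.trans hnone) (hcontr v u h2 h3)
    · obtain ⟨⟨v, u⟩, hvu, rfl⟩ := Finset.mem_image.mp hx2
      obtain ⟨h1, h2, h3⟩ := (hImem _).mp hvu
      exact absurd (hxy.trans hnone) (hcontr v u h2 h3)
    · obtain ⟨⟨v, u⟩, hvu, rfl⟩ := Finset.mem_image.mp hx2
      obtain ⟨⟨v', u'⟩, hvu', rfl⟩ := Finset.mem_image.mp hy2
      obtain ⟨h1, h2, h3⟩ := (hImem _).mp hvu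
      obtain ⟨h1', h2', h3'⟩ := (hImem _).mp hvu'
      have e1 : g (some ⟨v, u⟩) = pre v u h2 ++ v :: C u := by simp [hg, h2]
      have e2 : g (some ⟨v', u'⟩) = pre v' u' h2' ++ v' :: C u' := by simp [hg, h2']
      rw [e1, e2] at hxy
      obtain ⟨rfl, rfl⟩ := suffix_inj (hC_head u) (hC_head u') (hC_chainF u')
        (hC_chainF u) rfl hxy h3 h3'
      rfl
  -- counting
  have hfin : {l : List V | IsPathList E s t l}.Finite := by
    apply Set.Finite.subset (List.finite_length_le V N)
    intro l hl
    exact hl.2.2.2.length_le_card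
  have hcard : 1 + I.card ≤ {l : List V | IsPathList E s t l}.ncard := by
    have hsub : ↑(T.image g) ⊆ {l : List V | IsPathList E s t l} := by
      intro l hl
      obtain ⟨x, hx, rfl⟩ := Finset.mem_image.mp (Finset.mem_coe.mp hl)
      exact hgpath x hx
    have h1 : (T.image g).card ≤ {l : List V | IsPathList E s t l}.ncard := by
      rw [← Set.ncard_coe_finset]
      exact Set.ncard_le_ncard hsub hfin
    have h2 : (T.image g).card = 1 + I.card := by
      rw [Finset.card_image_of_injOn hginj, hT]
      rw [Finset.card_insert_of_notMem (by simp)]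
      rw [Finset.card_image_of_injective _ (Option.some_injective _)]
      omega
    omega
  -- evaluate I.card
  have hdegpos : ∀ v, v ≠ t → (Finset.univ.filter (fun u => E v u)).card ≥ 1 := by
    intro v hv
    refine Finset.card_pos.mpr ⟨f v, ?_⟩
    simp [hf v hv]
  have hIcard : (I.card : ℤ) = ∑ v ∈ Finset.univ.erase t,
      ((Finset.univ.filter (fun u => E v u)).card - 1 : ℤ) := by
    rw [hI, Finset.card_sigma, Nat.cast_sum]
    refine Finset.sum_congr rfl ?_
    intro v hv
    have hvt : v ≠ t := (Finset.mem_erase.mp hv).1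
    have hfe : Finset.univ.filter (fun u => E v u ∧ u ≠ f v)
        = (Finset.univ.filter (fun u => E v u)).erase (f v) := by
      ext u
      simp only [Finset.mem_filter, Finset.mem_erase, Finset.mem_univ, true_and]
      tauto
    rw [hfe, Finset.card_erase_of_mem (by simp [hf v hvt]),
      Nat.cast_sub (hdegpos v hvt)]
    norm_num
  -- sum of out-degrees equals number of edges
  have hsumdeg : (Finset.univ.filter (fun p : V × V => E p.1 p.2)).card
      = ∑ v ∈ Finset.univ.erase t, (Finset.univ.filter (fun u => E v u)).card := by
    have hfib := Finset.card_eq_sum_card_fiberwise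
      (f := fun p : V × V => p.1) (s := Finset.univ.filter (fun p : V × V => E p.1 p.2))
      (t := Finset.univ) (fun x _ => Finset.mem_univ _)
    rw [hfib]
    have hterm : ∀ v : V,
        ((Finset.univ.filter (fun p : V × V => E p.1 p.2)).filter
            (fun p => p.1 = v)).card
        = (Finset.univ.filter (fun u => E v u)).card := by
      intro v
      rw [show (Finset.univ.filter (fun p : V × V => E p.1 p.2)).filter (fun p => p.1 = v)
          = (Finset.univ.filter (fun u => E v u)).image (fun u => (v, u)) from ?_]
      · exact Finset.card_image_of_injective _ (fun a b hab => by simpa using hab)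
      · ext ⟨a, b⟩
        simp only [Finset.mem_filter, Finset.mem_image, Finset.mem_univ, true_and]
        constructor
        · rintro ⟨hE, rfl⟩; exact ⟨b, hE, rfl⟩
        · rintro ⟨u, hu, heq⟩; cases heq; exact ⟨hu, rfl⟩
    rw [Finset.sum_congr rfl (fun v _ => hterm v)]
    rw [← Finset.add_sum_erase Finset.univ _ (Finset.mem_univ t)]
    have hte : Finset.univ.filter (fun u => E t u) = ∅ := by
      ext u; simp [hdegt u]
    rw [hte]
    simp
  constructor
  · rw [← hIcard]
    have := hcard
    push_cast
    omega
  · have hNe : 1 ≤ N := Fintype.card_pos_iff.mpr ⟨t⟩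
    have hnc : (Finset.univ.erase t).card = N - 1 := by
      rw [Finset.card_erase_of_mem (Finset.mem_univ t), Finset.card_univ]
    have hsum2 : ∑ v ∈ Finset.univ.erase t,
        ((Finset.univ.filter (fun u => E v u)).card - 1 : ℤ)
        = (Finset.univ.filter (fun p : V × V => E p.1 p.2)).card - ((N : ℤ) - 1) := by
      rw [Finset.sum_sub_distrib, Finset.sum_const, hsumdeg, hnc,
        nsmul_eq_mul, mul_one, Nat.cast_sub hNe]
      push_cast
      ring
    rw [← hIcard] at hsum2
    have := hcard
    rw [hN] at *
    push_cast at *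
    omega
end

section
/- Let G = (V, E) be a DAG on a finite vertex set of size n with source s and destination t, s ≠ t, such that: every vertex and every edge of G lies on some directed s-t path; deg(s) ≥ 2 and deg(t) ≥ 2; and there do not exist vertices x, y, z with (x,y) ∈ E, (y,z) ∈ E and deg(x) = deg(y) = 2. Then the number of directed s-t paths of G is at least n/5. -/
/-- The degree of a vertex of a directed graph: in-degree plus out-degree. -/
def degree {V : Type*} [Fintype V] (E : V → V → Prop) [DecidableRel E] (v : V) : ℕ :=
  (Finset.univ.filter (fun u => E u v)).card + (Finset.univ.filter (fun u => E v u)).card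

namespace MyAux

variable {α : Type*} {R : α → α → Prop}

lemma chain'_head_reflTransGen : ∀ {l : List α} {s a : α}, l.Chain' R → l.head? = some s →
    a ∈ l → Relation.ReflTransGen R s a := by
  intro l
  induction l with
  | nil => intro s a _ h ha; simp at ha
  | cons x xs ih =>
    intro s a hc hh ha
    simp at hh; subst hh
    rcases List.mem_cons.mp ha with rfl | ha
    · exact Relation.ReflTransGen.refl
    · match xs, ha with
      | y :: ys, ha =>
        rw [List.Chain', List.isChain_cons_cons] at hc
        exact (ih hc.2 rfl ha).head hc.1

lemma exists_next : ∀ {l : List α} {a t : α}, l.Chain' R → a ∈ l → l.getLast? = some t →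
    a ≠ t → ∃ b, R a b := by
  intro l
  induction l with
  | nil => intro a t _ ha; simp at ha
  | cons x xs ih =>
    intro a t hc ha hl hat
    match xs, hc, hl with
    | [], _, hl =>
      simp at ha hl
      subst ha; subst hl; exact absurd rfl hat
    | y :: ys, hc, hl =>
      rw [List.Chain', List.isChain_cons_cons] at hc
      rcases List.mem_cons.mp ha with rfl | ha
      · exact ⟨y, hc.1⟩
      · exact ih hc.2 ha (by simpa using hl) hat

lemma exists_prev : ∀ {l : List α} {a s : α}, l.Chain' R → a ∈ l → l.head? = some s →
    a ≠ s → ∃ b, R b a := by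
  intro l
  induction l with
  | nil => intro a s _ ha; simp at ha
  | cons x xs ih =>
    intro a s hc ha hh has
    simp at hh; subst hh
    rcases List.mem_cons.mp ha with rfl | ha
    · exact absurd rfl has
    · match xs, hc, ha with
      | y :: ys, hc, ha =>
        rw [List.Chain', List.isChain_cons_cons] at hc
        rcases eq_or_ne a y with rfl | hay
        · exact ⟨_, hc.1⟩
        · exact ih hc.2 ha rfl hay

lemma snd_ne_head {l : List α} {a b s : α} (h : [a, b] <:+: l) (hnd : l.Nodup)
    (hh : l.head? = some s) : b ≠ s := by
  obtain ⟨l1, l2, rfl⟩ := h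
  match l1 with
  | [] =>
    simp only [List.nil_append, List.cons_append, List.head?_cons, Option.some.injEq] at hh
    subst hh
    rintro rfl
    simp at hnd
  | c :: l1' =>
    simp only [List.cons_append, List.head?_cons, Option.some.injEq] at hh
    subst hh
    rintro rfl
    have hmem : b ∈ l1' ++ [a, b] ++ l2 := by simp
    have := List.nodup_cons.mp (by simp only [List.cons_append] at hnd; exact hnd)
    exact this.1 hmem

lemma fst_ne_getLast {l : List α} {a b t : α} (h : [a, b] <:+: l) (hnd : l.Nodup)
    (hl : l.getLast? = some t) : a ≠ t := by
  obtain ⟨l1, l2, rfl⟩ := h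
  have hre : l1 ++ [a, b] ++ l2 = (l1 ++ [a]) ++ (b :: l2) := by simp
  rw [hre] at hnd hl
  rw [List.getLast?_append_cons] at hl
  have ht : t ∈ b :: l2 := by
    obtain ⟨h1, h2⟩ := List.mem_getLast?_eq_getLast (by simpa using hl : t ∈ (b :: l2).getLast?)
    exact h2 ▸ List.getLast_mem h1
  have hdisj := (List.nodup_append'.mp hnd).2.2
  rintro rfl
  exact hdisj (by simp) ht

lemma sum_biUnion_le {ι β : Type*} [DecidableEq β] (s : Finset ι) (f : ι → Finset β)
    (g : β → ℕ) : ∑ x ∈ s.biUnion f, g x ≤ ∑ i ∈ s, ∑ x ∈ f i, g x := by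
  classical
  induction s using Finset.induction with
  | empty => simp
  | @insert a s' h ih =>
    rw [Finset.biUnion_insert, Finset.sum_insert h]
    calc ∑ x ∈ f a ∪ s'.biUnion f, g x
        ≤ ∑ x ∈ f a, g x + ∑ x ∈ s'.biUnion f \ f a, g x := by
          rw [← Finset.sum_union (Finset.disjoint_sdiff)]
          exact Finset.sum_le_sum_of_subset (by
            intro x hx
            rcases Finset.mem_union.mp hx with h1 | h1
            · exact Finset.mem_union_left _ h1
            · by_cases h2 : x ∈ f a
              · exact Finset.mem_union_left _ h2
              · exact Finset.mem_union_right _ (Finset.mem_sdiff.mpr ⟨h1, h2⟩))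
      _ ≤ ∑ x ∈ f a, g x + ∑ x ∈ s'.biUnion f, g x :=
          Nat.add_le_add_left (Finset.sum_le_sum_of_subset (Finset.sdiff_subset)) _
      _ ≤ _ := Nat.add_le_add_left ih _

section Graph

variable {V : Type*} [Fintype V] [DecidableEq V] (E : V → V → Prop) [DecidableRel E]

/-- The out-neighborhood. -/
def outs (v : V) : Finset V := Finset.univ.filter (fun u => E v u)

/-- The in-neighborhood. -/
def ins (v : V) : Finset V := Finset.univ.filter (fun u => E u v)

lemma degree_eq (v : V) : degree E v = (ins E v).card + (outs E v).card := rfl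

lemma pathSet_finite (s t : V) : {l : List V | IsPathList E s t l}.Finite :=
  (List.finite_length_le V (Fintype.card V)).subset fun _ hl => hl.2.2.2.length_le_card

/-- The finset of all `s`-`t` paths. -/
noncomputable def F (s t : V) : Finset (List V) := (pathSet_finite E s t).toFinset

lemma mem_F {s t : V} {l : List V} : l ∈ F E s t ↔ IsPathList E s t l :=
  Set.Finite.mem_toFinset _

variable {E}

lemma F_eq_biUnion (hdag : ∀ v, ¬ Relation.TransGen E v v) {v t : V} (hvt : v ≠ t) :
    F E v t = (outs E v).biUnion (fun u => (F E u t).image (List.cons v)) := by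
  ext l
  simp only [mem_F, Finset.mem_biUnion, Finset.mem_image, outs, Finset.mem_filter,
    Finset.mem_univ, true_and]
  constructor
  · rintro ⟨hc, hh, hl, hnd⟩
    match l, hh with
    | v' :: l', hh =>
      simp only [List.head?_cons, Option.some.injEq] at hh
      subst hh
      match l', hl with
      | [], hl => simp at hl; exact absurd hl hvt
      | u :: l'', hl =>
        rw [List.Chain', List.isChain_cons_cons] at hc
        refine ⟨u, hc.1, u :: l'', ⟨hc.2, rfl, ?_, (List.nodup_cons.mp hnd).2⟩, rfl⟩
        rw [List.getLast?_cons_cons] at hl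
        exact hl
  · rintro ⟨u, hvu, l', ⟨hc, hh, hl, hnd⟩, rfl⟩
    match l', hh with
    | u' :: l'', hh =>
      simp only [List.head?_cons, Option.some.injEq] at hh
      subst hh
      refine ⟨List.isChain_cons_cons.mpr ⟨hvu, hc⟩, rfl, ?_, ?_⟩
      · rw [List.getLast?_cons_cons]; exact hl
      · rw [List.nodup_cons]
        refine ⟨fun hmem => hdag v ?_, hnd⟩
        exact Relation.TransGen.head' hvu (chain'_head_reflTransGen hc rfl hmem)

lemma card_F (hdag : ∀ v, ¬ Relation.TransGen E v v) {v t : V} (hvt : v ≠ t) :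
    (F E v t).card = ∑ u ∈ outs E v, (F E u t).card := by
  rw [F_eq_biUnion hdag hvt, Finset.card_biUnion]
  · exact Finset.sum_congr rfl fun u _ => Finset.card_image_of_injective _ List.cons_injective
  · intro u1 h1 u2 h2 h12
    rw [Function.onFun, Finset.disjoint_left]
    rintro l hl1 hl2
    simp only [Finset.mem_image, mem_F] at hl1 hl2
    obtain ⟨la, hla, rfl⟩ := hl1
    obtain ⟨lb, hlb, heq⟩ := hl2
    have : la = lb := List.cons_injective heq.symm
    subst this
    exact h12 (by rw [← Option.some_inj, ← hla.2.1, ← hlb.2.1])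

/-- The set of vertices reachable from `v`, other than `t`. -/
noncomputable def Dset (E : V → V → Prop) (t v : V) : Finset V :=
  (Set.toFinite {u | Relation.ReflTransGen E v u ∧ u ≠ t}).toFinset

lemma mem_Dset {t v u : V} : u ∈ Dset E t v ↔ Relation.ReflTransGen E v u ∧ u ≠ t :=
  Set.Finite.mem_toFinset _

lemma key (hdag : ∀ v, ¬ Relation.TransGen E v v) (t : V)
    (hout : ∀ v, v ≠ t → 1 ≤ (outs E v).card) (houtt : ∀ u, ¬ E t u) :
    ∀ v, (∑ u ∈ Dset E t v, ((outs E u).card - 1)) + 1 ≤ (F E v t).card := by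
  have hwf : WellFounded (fun a b => Relation.TransGen E b a) := by
    have h1 : IsTrans V (fun a b => Relation.TransGen E b a) := ⟨fun a b c h1 h2 => h2.trans h1⟩
    have h2 : IsIrrefl V (fun a b => Relation.TransGen E b a) := ⟨fun a => hdag a⟩
    exact Finite.wellFounded_of_trans_of_irrefl _
  intro v
  induction v using hwf.induction with
  | _ v ih =>
  by_cases hvt : v = t
  · subst hvt
    have hD : Dset E v v = ∅ := by
      ext u
      simp only [mem_Dset, Finset.notMem_empty, iff_false, not_and]
      intro hr
      rcases hr.cases_head with rfl | ⟨c, hc, _⟩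
      · exact fun h => h rfl
      · exact absurd hc (houtt c)
    rw [hD]
    simp only [Finset.sum_empty, zero_add]
    rw [Nat.one_le_iff_ne_zero, ← Nat.pos_iff_ne_zero, Finset.card_pos]
    exact ⟨[v], (mem_F _).mpr ⟨List.isChain_singleton v, rfl, rfl, List.nodup_singleton v⟩⟩
  · have hsub : Dset E t v ⊆ insert v ((outs E v).biUnion (Dset E t)) := by
      intro u hu
      obtain ⟨hr, hut⟩ := mem_Dset.mp hu
      rcases hr.cases_head with rfl | ⟨c, hvc, hcu⟩
      · exact Finset.mem_insert_self _ _
      · exact Finset.mem_insert_of_mem (Finset.mem_biUnion.mpr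
          ⟨c, by simp [outs, hvc], mem_Dset.mpr ⟨hcu, hut⟩⟩)
    set c : V → ℕ := fun u => (outs E u).card - 1 with hc
    set B : Finset V := (outs E v).biUnion (Dset E t) with hB
    calc (∑ u ∈ Dset E t v, c u) + 1
        ≤ (∑ u ∈ insert v B, c u) + 1 := by
          exact Nat.add_le_add_right (Finset.sum_le_sum_of_subset hsub) 1
      _ ≤ (c v + ∑ u ∈ B, c u) + 1 := by
          refine Nat.add_le_add_right ?_ 1
          by_cases hv : v ∈ B
          · rw [Finset.insert_eq_self.mpr hv]; exact Nat.le_add_left _ _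
          · rw [Finset.sum_insert hv]
      _ ≤ (c v + ∑ u ∈ outs E v, ∑ x ∈ Dset E t u, c x) + 1 :=
          Nat.add_le_add_right (Nat.add_le_add_left (sum_biUnion_le _ _ _) _) 1
      _ = (∑ u ∈ outs E v, ∑ x ∈ Dset E t u, c x) + (outs E v).card := by
          have : c v + 1 = (outs E v).card := Nat.succ_pred_eq_of_pos (hout v hvt)
          omega
      _ = ∑ u ∈ outs E v, ((∑ x ∈ Dset E t u, c x) + 1) := by
          rw [Finset.sum_add_distrib, Finset.sum_const, smul_eq_mul, mul_one]
      _ ≤ ∑ u ∈ outs E v, (F E u t).card := by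
          refine Finset.sum_le_sum fun u hu => ih u ?_
          exact Relation.TransGen.single (by simpa [outs] using hu)
      _ = (F E v t).card := (card_F hdag hvt).symm

end Graph

end MyAux

open MyAux in
/-- In a reduced DAG on `n` vertices — every vertex and edge lies on some directed
`s`-`t` path, `deg(s) ≥ 2`, `deg(t) ≥ 2`, and no two consecutive vertices `x, y` starting
a path `x → y → z` both have degree exactly two — there are at least `n/5` directed
`s`-`t` paths. -/
theorem reduced_dag_num_paths {V : Type*} [Fintype V] [DecidableEq V]
    (E : V → V → Prop) [DecidableRel E]
    (hdag : ∀ v, ¬ Relation.TransGen E v v) (s t : V) (hst : s ≠ t)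
    (hvert : ∀ v : V, ∃ l, IsPathList E s t l ∧ v ∈ l)
    (hedge : ∀ a b : V, E a b → ∃ l, IsPathList E s t l ∧ [a, b] <:+: l)
    (hs : 2 ≤ degree E s) (ht : 2 ≤ degree E t)
    (hdeg2 : ¬ ∃ x y z : V, E x y ∧ E y z ∧ degree E x = 2 ∧ degree E y = 2) :
    (Fintype.card V : ℚ) / 5 ≤ ({l : List V | IsPathList E s t l}.ncard : ℚ) := by
  classical
  set n := Fintype.card V with hn
  have houtt : ∀ u, ¬ E t u := by
    intro u hEu
    obtain ⟨l, hp, hinf⟩ := hedge t u hEu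
    exact MyAux.fst_ne_getLast hinf hp.2.2.2 hp.2.2.1 rfl
  have hinss : ∀ u, ¬ E u s := by
    intro u hEu
    obtain ⟨l, hp, hinf⟩ := hedge u s hEu
    exact MyAux.snd_ne_head hinf hp.2.2.2 hp.2.1 rfl
  have hout : ∀ v, v ≠ t → 1 ≤ (outs E v).card := by
    intro v hvt
    obtain ⟨l, hp, hv⟩ := hvert v
    obtain ⟨b, hb⟩ := MyAux.exists_next hp.1 hv hp.2.2.1 hvt
    exact Finset.card_pos.mpr ⟨b, by simp [outs, hb]⟩
  have hin : ∀ v, v ≠ s → 1 ≤ (ins E v).card := by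
    intro v hvs
    obtain ⟨l, hp, hv⟩ := hvert v
    obtain ⟨b, hb⟩ := MyAux.exists_prev hp.1 hv hp.2.1 hvs
    exact Finset.card_pos.mpr ⟨b, by simp [ins, hb]⟩
  have hreach : ∀ v, Relation.ReflTransGen E s v := by
    intro v
    obtain ⟨l, hp, hv⟩ := hvert v
    exact MyAux.chain'_head_reflTransGen hp.1 hp.2.1 hv
  set m := ∑ v : V, (outs E v).card with hm
  set P := (F E s t).card with hP
  have hncard : {l : List V | IsPathList E s t l}.ncard = P := by
    rw [Set.ncard_eq_toFinset_card _ (pathSet_finite E s t)]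
    rfl
  -- key inequality : m + 2 ≤ P + n
  have hDs : Dset E t s = Finset.univ.erase t := by
    ext u
    simp only [mem_Dset, Finset.mem_erase, Finset.mem_univ, and_true]
    exact ⟨fun h => h.2, fun h => ⟨hreach u, h⟩⟩
  have hkey := MyAux.key hdag t hout houtt s
  rw [hDs] at hkey
  have houtst : (outs E t).card = 0 := by
    rw [Finset.card_eq_zero, outs, Finset.filter_eq_empty_iff]
    exact fun _ _ => houtt _
  have hsum_erase : ∑ u ∈ Finset.univ.erase t, (outs E u).card = m :=
    Finset.sum_erase _ houtst
  have hcard_erase : (Finset.univ.erase t).card = n - 1 := by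
    rw [Finset.card_erase_of_mem (Finset.mem_univ t), Finset.card_univ]
  have h1 : (∑ u ∈ Finset.univ.erase t, ((outs E u).card - 1)) + (n - 1) = m := by
    rw [← hsum_erase, ← hcard_erase]
    calc (∑ u ∈ Finset.univ.erase t, ((outs E u).card - 1)) + (Finset.univ.erase t).card
        = ∑ u ∈ Finset.univ.erase t, (((outs E u).card - 1) + 1) := by
          rw [Finset.sum_add_distrib, Finset.sum_const, smul_eq_mul, mul_one]
      _ = ∑ u ∈ Finset.univ.erase t, (outs E u).card := by
          refine Finset.sum_congr rfl fun u hu => ?_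
          have := hout u (Finset.mem_erase.mp hu).1
          omega
  have hPn : m + 2 ≤ P + n := by
    have hn1 : 1 ≤ n := by
      rw [hn]
      exact Fintype.card_pos_iff.mpr ⟨s⟩
    omega
  -- degree counting
  have hdegall : ∀ v : V, 2 ≤ degree E v := by
    intro v
    rcases eq_or_ne v s with rfl | hvs
    · exact hs
    rcases eq_or_ne v t with rfl | hvt
    · exact ht
    · rw [degree_eq]
      have := hin v hvs
      have := hout v hvt
      omega
  set B := Finset.univ.filter (fun v => degree E v = 2) with hB
  set A := Finset.univ.filter (fun v => ¬ degree E v = 2) with hA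
  have hAB : B.card + A.card = n := by
    rw [hB, hA, Finset.card_filter_add_card_filter_not, Finset.card_univ]
  have hdegsum : ∑ v : V, degree E v = m + m := by
    have hins : ∑ v : V, (ins E v).card = ∑ v : V, (outs E v).card := by
      simp only [ins, outs, Finset.card_filter]
      exact Finset.sum_comm
    simp only [degree_eq, Finset.sum_add_distrib, hins, hm]
  have h2m : 2 * B.card + 3 * A.card ≤ m + m := by
    have hb : B.card * 2 ≤ ∑ v ∈ B, degree E v := by
      simpa using Finset.card_nsmul_le_sum B (fun v => degree E v) 2
        (fun v _ => hdegall v)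
    have ha : A.card * 3 ≤ ∑ v ∈ A, degree E v := by
      have h3 : ∀ v ∈ A, 3 ≤ degree E v := by
        intro v hv
        have h2 := hdegall v
        have hne : ¬ degree E v = 2 := (Finset.mem_filter.mp hv).2
        omega
      simpa using Finset.card_nsmul_le_sum A (fun v => degree E v) 3 h3
    have hsum := Finset.sum_filter_add_sum_filter_not Finset.univ
      (fun v => degree E v = 2) (fun v => degree E v)
    rw [← hB, ← hA] at hsum
    omega
  set B' := B.filter (fun y => y ≠ s ∧ y ≠ t) with hB'
  have hBB' : B.card ≤ B'.card + 2 := by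
    have hsub : B ⊆ B' ∪ {s, t} := by
      intro y hy
      by_cases h : y ≠ s ∧ y ≠ t
      · exact Finset.mem_union_left _ (Finset.mem_filter.mpr ⟨hy, h⟩)
      · refine Finset.mem_union_right _ ?_
        simp only [Finset.mem_insert, Finset.mem_singleton]
        by_contra hc
        push_neg at hc
        exact h ⟨hc.1, hc.2⟩
    calc B.card ≤ (B' ∪ {s, t}).card := Finset.card_le_card hsub
      _ ≤ B'.card + ({s, t} : Finset V).card := Finset.card_union_le _ _
      _ ≤ B'.card + 2 := by
          refine Nat.add_le_add_left ?_ _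
          exact (Finset.card_insert_le _ _).trans (by simp)
  have hB'A : ∀ x y, E x y → y ∈ B' → x ∈ A := by
    intro x y hxy hyB'
    obtain ⟨hyB, hys, hyt⟩ := Finset.mem_filter.mp hyB'
    have hy2 : degree E y = 2 := (Finset.mem_filter.mp hyB).2
    obtain ⟨z, hz⟩ : ∃ z, E y z := by
      obtain ⟨z, hz⟩ := Finset.card_pos.mp (hout y hyt)
      exact ⟨z, (Finset.mem_filter.mp hz).2⟩
    refine Finset.mem_filter.mpr ⟨Finset.mem_univ x, fun hx2 => ?_⟩
    exact hdeg2 ⟨x, y, z, hxy, hz, hx2, hy2⟩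
  have hB'card : B'.card ≤ ∑ x ∈ A, (outs E x).card := by
    calc B'.card ≤ ∑ y ∈ B', (ins E y).card := by
          simpa using Finset.card_nsmul_le_sum B' (fun y => (ins E y).card) 1
            (fun y hy => hin y (Finset.mem_filter.mp hy).2.1)
      _ = ∑ y ∈ B', ∑ x : V, (if E x y then 1 else 0) := by
          simp only [ins, Finset.card_filter]
      _ = ∑ x : V, ∑ y ∈ B', (if E x y then 1 else 0) := Finset.sum_comm
      _ = ∑ x : V, (B'.filter (fun y => E x y)).card := by
          simp only [Finset.card_filter]
      _ = ∑ x ∈ A, (B'.filter (fun y => E x y)).card := by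
          refine (Finset.sum_subset (Finset.subset_univ A) fun x _ hxA => ?_).symm
          rw [Finset.card_eq_zero, Finset.filter_eq_empty_iff]
          exact fun y hy hxy => hxA (hB'A x y hxy hy)
      _ ≤ ∑ x ∈ A, (outs E x).card := by
          refine Finset.sum_le_sum fun x _ => Finset.card_le_card ?_
          intro y hy
          simp only [outs, Finset.mem_filter, Finset.mem_univ, true_and]
          exact (Finset.mem_filter.mp hy).2
  have hsplit : ∑ x ∈ B, (outs E x).card + ∑ x ∈ A, (outs E x).card = m := by
    have hsum := Finset.sum_filter_add_sum_filter_not Finset.univ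
      (fun v => degree E v = 2) (fun v => (outs E v).card)
    rw [← hB, ← hA] at hsum
    exact hsum
  have hBout : B.card ≤ ∑ x ∈ B, (outs E x).card + 1 := by
    calc B.card ≤ (B.erase t).card + 1 := by
          have hsub : B ⊆ insert t (B.erase t) := Finset.subset_insert_iff.mpr (le_refl _)
          exact (Finset.card_le_card hsub).trans (Finset.card_insert_le _ _)
      _ ≤ (∑ x ∈ B.erase t, (outs E x).card) + 1 := by
          refine Nat.add_le_add_right ?_ 1
          simpa using Finset.card_nsmul_le_sum (B.erase t) (fun x => (outs E x).card) 1
            (fun x hx => hout x (Finset.mem_erase.mp hx).1)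
      _ ≤ (∑ x ∈ B, (outs E x).card) + 1 :=
          Nat.add_le_add_right (Finset.sum_le_sum_of_subset (Finset.erase_subset _ _)) 1
  have hfin : n ≤ 5 * P := by omega
  rw [hncard]
  rw [div_le_iff₀ (by norm_num : (0:ℚ) < 5)]
  have hfinq : (n : ℚ) ≤ (P : ℚ) * 5 := by exact_mod_cast (by omega : n ≤ P * 5)
  exact hfinq
end
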